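/- If A ∈ sp(4,ℂ) satisfies A² = 0 and the kernel of A has dimension 2 (equivalently A has rank 2), then there exists B ∈ Sp(4,ℂ) such that B⁻¹AB = E₁₃ + E₂₄, where Eᵢⱼ is the 4×4 matrix whose (i,j) entry is 1 and all other entries are 0. -/

import Mathlib

open Matrix

/-- The 4×4 standard symplectic matrix `J = [[0, I], [-I, 0]]`. -/
noncomputable def J4 : Matrix (Fin 4) (Fin 4) ℂ :=
  !![0, 0, 1, 0;
     0, 0, 0, 1;
     -1, 0, 0, 0;
     0, -1, 0, 0]

lemma J4_mul_J4 : J4 * J4 = -1 := by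
  ext i j
  fin_cases i <;> fin_cases j <;>
    simp [J4, Matrix.mul_apply, Fin.sum_univ_four, Matrix.one_apply, Matrix.vecHead,
      Matrix.vecTail]

lemma J4_transpose : J4ᵀ = -J4 := by
  ext i j
  fin_cases i <;> fin_cases j <;> simp [J4, Matrix.vecHead, Matrix.vecTail]

lemma det_J4 : J4.det = 1 := by
  simp [J4, Matrix.det_succ_row_zero, Fin.sum_univ_succ, Matrix.det_fin_two,
    Matrix.vecHead, Matrix.vecTail, Fin.succAbove]

/-- The symplectic bilinear form. -/
noncomputable def om (x y : Fin 4 → ℂ) : ℂ := x ⬝ᵥ (J4 *ᵥ y)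

/-- Dot-product linear functional. -/
noncomputable def dpL (u : Fin 4 → ℂ) : (Fin 4 → ℂ) →ₗ[ℂ] ℂ where
  toFun x := u ⬝ᵥ x
  map_add' x y := by simp
  map_smul' c x := by simp

lemma om_eq_dpL (u x : Fin 4 → ℂ) : om u x = dpL (u ᵥ* J4) x := by
  simp [om, dpL, dotProduct_mulVec]

lemma om_symm_aux (M : Matrix (Fin 4) (Fin 4) ℂ) (hM : Mᵀ = M) (x y : Fin 4 → ℂ) :
    x ⬝ᵥ (M *ᵥ y) = y ⬝ᵥ (M *ᵥ x) := by
  rw [dotProduct_mulVec, ← vecMul_transpose, hM, dotProduct_comm]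

lemma om_skew (x y : Fin 4 → ℂ) : om x y = - om y x := by
  rw [om, om, dotProduct_mulVec, ← mulVec_transpose, J4_transpose, neg_mulVec,
    neg_dotProduct, dotProduct_comm]

lemma om_self (x : Fin 4 → ℂ) : om x x = 0 := by
  have h := om_skew x x
  linear_combination h / 2

lemma om_zero_left (y : Fin 4 → ℂ) : om 0 y = 0 := by simp [om]

lemma om_add_left (x y z : Fin 4 → ℂ) : om (x + y) z = om x z + om y z := by
  simp [om, add_dotProduct]

lemma om_smul_left (c : ℂ) (x z : Fin 4 → ℂ) : om (c • x) z = c * om x z := by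
  simp [om, smul_dotProduct]

lemma om_add_right (x y z : Fin 4 → ℂ) : om x (y + z) = om x y + om x z := by
  simp [om, mulVec_add, dotProduct_add]

lemma om_smul_right (c : ℂ) (x z : Fin 4 → ℂ) : om x (c • z) = c * om x z := by
  simp [om, mulVec_smul, dotProduct_smul]

lemma om_nondeg (x : Fin 4 → ℂ) (h : ∀ y, om x y = 0) : x = 0 := by
  have h1 : x ᵥ* J4 = 0 := by
    funext i
    have := h (Pi.single i 1)
    simpa [om, mulVec_single, vecMul, dotProduct] using this
  have h2 : x ᵥ* (J4 * J4) = 0 := by rw [← vecMul_vecMul, h1, zero_vecMul]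
  rw [J4_mul_J4] at h2
  simpa [Matrix.vecMul_neg, Matrix.vecMul_one, neg_eq_zero] using h2

section Main

variable {A : Matrix (Fin 4) (Fin 4) ℂ}

lemma bsym (hsp : Aᵀ * J4 + J4 * A = 0) (x y : Fin 4 → ℂ) :
    om (A *ᵥ x) y = om (A *ᵥ y) x := by
  have hM : (Aᵀ * J4)ᵀ = Aᵀ * J4 := by
    have h : Aᵀ * J4 = -(J4 * A) := eq_neg_of_add_eq_zero_left hsp
    rw [Matrix.transpose_mul, Matrix.transpose_transpose, J4_transpose, h]
    simp [Matrix.neg_mul, Matrix.mul_neg]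
  have key : ∀ z w : Fin 4 → ℂ, om (A *ᵥ z) w = z ⬝ᵥ ((Aᵀ * J4) *ᵥ w) := by
    intro z w
    rw [om, ← vecMul_transpose, dotProduct_mulVec, vecMul_vecMul, ← dotProduct_mulVec]
  rw [key, key, om_symm_aux _ hM]

lemma hAA (hA2 : A ^ 2 = 0) (z : Fin 4 → ℂ) : A *ᵥ (A *ᵥ z) = 0 := by
  rw [mulVec_mulVec, show A * A = 0 by rw [← pow_two]; exact hA2, zero_mulVec]

lemma omAA (hsp : Aᵀ * J4 + J4 * A = 0) (hA2 : A ^ 2 = 0) (x y : Fin 4 → ℂ) :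
    om (A *ᵥ x) (A *ᵥ y) = 0 := by
  rw [bsym hsp, hAA hA2, om_zero_left]

lemma indep_pair (hsp : Aᵀ * J4 + J4 * A = 0) {v w : Fin 4 → ℂ}
    (hv : om (A *ᵥ v) v = 1) (hvw : om (A *ᵥ v) w = 0) (hw : A *ᵥ w ≠ 0) :
    ∀ a b : ℂ, a • (A *ᵥ v) + b • (A *ᵥ w) = 0 → a = 0 ∧ b = 0 := by
  intro a b h
  have h1 : om (a • (A *ᵥ v) + b • (A *ᵥ w)) v = 0 := by rw [h, om_zero_left]
  rw [om_add_left, om_smul_left, om_smul_left, hv, bsym hsp w v, hvw] at h1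
  have ha : a = 0 := by simpa using h1
  refine ⟨ha, ?_⟩
  rw [ha, zero_smul, zero_add] at h
  rcases smul_eq_zero.mp h with hb | hb
  · exact hb
  · exact absurd hb hw

end Main

lemma conj_entry (M B : Matrix (Fin 4) (Fin 4) ℂ) (i j : Fin 4) :
    (Bᵀ * M * B) i j = (fun k => B k i) ⬝ᵥ (M *ᵥ fun k => B k j) := by
  simp only [Matrix.mul_apply, Matrix.transpose_apply, dotProduct, Matrix.mulVec,
    Finset.sum_mul, Finset.mul_sum]
  rw [Finset.sum_comm]
  refine Finset.sum_congr rfl fun k _ => Finset.sum_congr rfl fun l _ => by ring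

lemma mul_entry (A B : Matrix (Fin 4) (Fin 4) ℂ) (i j : Fin 4) :
    (A * B) i j = (A *ᵥ fun k => B k j) i := by
  simp [Matrix.mul_apply, Matrix.mulVec, dotProduct]

/-- If `A ∈ sp(4,ℂ)` satisfies `A² = 0` and `ker A` has dimension `2`, then `A` is
symplectically conjugated to `E₁₃ + E₂₄`. -/
theorem sp4_nilpotent_ker_dim_two_canonical_form
    (A : Matrix (Fin 4) (Fin 4) ℂ)
    (hsp : Aᵀ * J4 + J4 * A = 0)
    (hA2 : A ^ 2 = 0)
    (hker : Module.finrank ℂ (LinearMap.ker A.mulVecLin) = 2) :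
    ∃ B : Matrix (Fin 4) (Fin 4) ℂ,
      Bᵀ * J4 * B = J4 ∧
      B⁻¹ * A * B = !![0, 0, 1, 0;
                       0, 0, 0, 1;
                       0, 0, 0, 0;
                       0, 0, 0, 0] := by
  have h4 : Module.finrank ℂ (Fin 4 → ℂ) = 4 := by
    simp [Module.finrank_fintype_fun_eq_card]
  -- Step A : some vector not in the kernel
  have hAne : ∃ x, A *ᵥ x ≠ 0 := by
    by_contra h
    push_neg at h
    have htop : LinearMap.ker A.mulVecLin = ⊤ := by
      ext z; simp [Matrix.mulVecLin_apply, h]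
    rw [htop, finrank_top, h4] at hker
    norm_num at hker
  -- Step B : a vector with nonzero beta-norm
  obtain ⟨x, hx⟩ := hAne
  have hex : ∃ v, om (A *ᵥ v) v ≠ 0 := by
    have hy : ∃ y, om (A *ᵥ x) y ≠ 0 := by
      by_contra h
      push_neg at h
      exact hx (om_nondeg _ h)
    obtain ⟨y, hxy⟩ := hy
    by_cases h1 : om (A *ᵥ x) x = 0
    · by_cases h2 : om (A *ᵥ y) y = 0
      · refine ⟨x + y, ?_⟩
        have expand : om (A *ᵥ (x + y)) (x + y)
            = om (A *ᵥ x) x + om (A *ᵥ x) y + (om (A *ᵥ y) x + om (A *ᵥ y) y) := by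
          rw [mulVec_add, om_add_left, om_add_right, om_add_right]
        rw [expand, h1, h2, bsym hsp y x] at *
        intro hh
        apply hxy
        linear_combination hh / 2
      · exact ⟨y, h2⟩
    · exact ⟨x, h1⟩
  obtain ⟨v₀, hv₀⟩ := hex
  -- normalize v
  have hexv : ∃ v, om (A *ᵥ v) v = 1 := by
    obtain ⟨s, hs⟩ := IsAlgClosed.exists_pow_nat_eq (om (A *ᵥ v₀) v₀) (two_pos)
    have hs0 : s ≠ 0 := by
      intro h
      rw [h] at hs
      simp at hs
      exact hv₀ hs.symm
    refine ⟨s⁻¹ • v₀, ?_⟩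
    rw [mulVec_smul, om_smul_left, om_smul_right, ← hs]
    field_simp
  obtain ⟨v, hv⟩ := hexv
  -- Step D : find w₀ with om (A v) w₀ = 0 and A w₀ ≠ 0
  set f : (Fin 4 → ℂ) →ₗ[ℂ] ℂ := dpL ((A *ᵥ v) ᵥ* J4) with hf_def
  have hfeq : ∀ x, f x = om (A *ᵥ v) x := fun x => (om_eq_dpL _ x).symm
  have hker_f : Module.finrank ℂ (LinearMap.ker f) = 3 := by
    have hrange : LinearMap.range f = ⊤ := by
      rw [Submodule.eq_top_iff']
      intro c
      refine ⟨c • v, ?_⟩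
      rw [_root_.map_smul, hfeq, hv, smul_eq_mul, mul_one]
    have hrk := LinearMap.finrank_range_add_finrank_ker f
    rw [hrange, finrank_top, Module.finrank_self, h4] at hrk
    omega
  have hnle : ¬ (LinearMap.ker f ≤ LinearMap.ker A.mulVecLin) := by
    intro hle
    have := Submodule.finrank_mono hle
    omega
  obtain ⟨w₀, hw₀f, hw₀A⟩ := SetLike.not_le_iff_exists.mp hnle
  have hvw₀ : om (A *ᵥ v) w₀ = 0 := by rw [← hfeq]; exact hw₀f
  have hAw₀ : A *ᵥ w₀ ≠ 0 := by
    simpa [LinearMap.mem_ker, Matrix.mulVecLin_apply] using hw₀A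
  -- Step E : om (A w₀) w₀ ≠ 0
  have hww₀ : om (A *ᵥ w₀) w₀ ≠ 0 := by
    intro hww
    have hpair := indep_pair hsp hv hvw₀ hAw₀
    have hli : LinearIndependent ℂ ![v, w₀, A *ᵥ v, A *ᵥ w₀] := by
      rw [Fintype.linearIndependent_iff]
      intro g hg
      rw [Fin.sum_univ_four] at hg
      simp only [Matrix.cons_val_zero, Matrix.cons_val_one, Matrix.head_cons,
        Matrix.cons_val_two, Matrix.tail_cons, Matrix.cons_val_three, Matrix.head_fin_const] at hg
      have hg2 : A *ᵥ (g 0 • v + g 1 • w₀ + g 2 • (A *ᵥ v) + g 3 • (A *ᵥ w₀)) = 0 := by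
        rw [hg, mulVec_zero]
      rw [mulVec_add, mulVec_add, mulVec_add, mulVec_smul, mulVec_smul, mulVec_smul,
        mulVec_smul, hAA hA2, hAA hA2, smul_zero, smul_zero, add_zero, add_zero] at hg2
      obtain ⟨h0, h1⟩ := hpair _ _ hg2
      rw [h0, h1, zero_smul, zero_smul, zero_add, zero_add] at hg
      obtain ⟨h2, h3⟩ := hpair _ _ hg
      intro i
      fin_cases i <;> assumption
    have hcard : Fintype.card (Fin 4) = Module.finrank ℂ (Fin 4 → ℂ) := by
      rw [h4]; simp
    let bb := basisOfLinearIndependentOfCardEqFinrank hli hcard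
    have hcoe : (bb : Fin 4 → (Fin 4 → ℂ)) = ![v, w₀, A *ᵥ v, A *ᵥ w₀] :=
      coe_basisOfLinearIndependentOfCardEqFinrank hli hcard
    have hvals : ∀ i : Fin 4, dpL ((A *ᵥ w₀) ᵥ* J4) (![v, w₀, A *ᵥ v, A *ᵥ w₀] i) = 0 := by
      intro i
      rw [← om_eq_dpL]
      fin_cases i
      · show om (A *ᵥ w₀) v = 0
        rw [bsym hsp w₀ v]; exact hvw₀
      · exact hww
      · exact omAA hsp hA2 _ _
      · exact omAA hsp hA2 _ _
    have hzero : dpL ((A *ᵥ w₀) ᵥ* J4) = 0 := by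
      apply bb.ext
      intro i
      rw [show bb i = ![v, w₀, A *ᵥ v, A *ᵥ w₀] i from by rw [← hcoe]]
      rw [hvals i, LinearMap.zero_apply]
    apply hAw₀
    apply om_nondeg
    intro yy
    rw [om_eq_dpL, hzero, LinearMap.zero_apply]
  -- normalize w
  have hexw : ∃ w, om (A *ᵥ w) w = 1 ∧ om (A *ᵥ v) w = 0 ∧ A *ᵥ w ≠ 0 := by
    obtain ⟨t, ht⟩ := IsAlgClosed.exists_pow_nat_eq (om (A *ᵥ w₀) w₀) two_pos
    have ht0 : t ≠ 0 := by
      intro h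
      rw [h] at ht
      simp at ht
      exact hww₀ ht.symm
    refine ⟨t⁻¹ • w₀, ?_, ?_, ?_⟩
    · rw [mulVec_smul, om_smul_left, om_smul_right, ← ht]
      field_simp
    · rw [om_smul_right, hvw₀, mul_zero]
    · rw [mulVec_smul]
      exact smul_ne_zero (inv_ne_zero ht0) hAw₀
  obtain ⟨w, hww, hvw, hAw⟩ := hexw
  -- the symplectic basis
  set b4 : Fin 4 → ℂ := w + (om v w) • (A *ᵥ v) with hb4
  set B : Matrix (Fin 4) (Fin 4) ℂ :=
    Matrix.of (fun i j => (![A *ᵥ v, A *ᵥ w, v, b4] j) i) with hB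
  have hAb4 : A *ᵥ b4 = A *ᵥ w := by
    rw [hb4, mulVec_add, mulVec_smul, hAA hA2, smul_zero, add_zero]
  have e03 : om (A *ᵥ v) b4 = 0 := by
    rw [hb4, om_add_right, om_smul_right, hvw, omAA hsp hA2, mul_zero, add_zero]
  have e12 : om (A *ᵥ w) v = 0 := by rw [bsym hsp w v]; exact hvw
  have e13 : om (A *ᵥ w) b4 = 1 := by
    rw [hb4, om_add_right, om_smul_right, hww, omAA hsp hA2, mul_zero, add_zero]
  have e23 : om v b4 = 0 := by
    have hvAv : om v (A *ᵥ v) = -1 := by rw [om_skew, hv]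
    rw [hb4, om_add_right, om_smul_right, hvAv]
    ring
  have e20 : om v (A *ᵥ v) = -1 := by rw [om_skew, hv]
  have e21 : om v (A *ᵥ w) = 0 := by rw [om_skew, e12, neg_zero]
  have e30 : om b4 (A *ᵥ v) = 0 := by rw [om_skew, e03, neg_zero]
  have e31 : om b4 (A *ᵥ w) = -1 := by rw [om_skew, e13]
  have e32 : om b4 v = 0 := by rw [om_skew, e23, neg_zero]
  have e01 : om (A *ᵥ v) (A *ᵥ w) = 0 := omAA hsp hA2 _ _
  have e10 : om (A *ᵥ w) (A *ᵥ v) = 0 := omAA hsp hA2 _ _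
  have key : ∀ i j, (Bᵀ * J4 * B) i j
      = om (![A *ᵥ v, A *ᵥ w, v, b4] i) (![A *ᵥ v, A *ᵥ w, v, b4] j) := by
    intro i j
    rw [conj_entry]
    rfl
  have hGram : Bᵀ * J4 * B = J4 := by
    ext i j
    rw [key]
    fin_cases i <;> fin_cases j
    · simpa only [J4, Matrix.cons_val_zero, Matrix.cons_val_one, Matrix.head_cons,
        Matrix.cons_val_two, Matrix.tail_cons, Matrix.cons_val_three, Matrix.head_fin_const,
        Matrix.cons_val', Matrix.empty_val', Matrix.cons_val_fin_one, Matrix.vecHead,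
        Matrix.vecTail, Fin.zero_eta, Fin.mk_one, Fin.reduceFinMk, Function.comp_apply, neg_neg, neg_zero, Matrix.of_apply, Matrix.cons_val_succ] using om_self (A *ᵥ v)
    · simpa only [J4, Matrix.cons_val_zero, Matrix.cons_val_one, Matrix.head_cons,
        Matrix.cons_val_two, Matrix.tail_cons, Matrix.cons_val_three, Matrix.head_fin_const,
        Matrix.cons_val', Matrix.empty_val', Matrix.cons_val_fin_one, Matrix.vecHead,
        Matrix.vecTail, Fin.zero_eta, Fin.mk_one, Fin.reduceFinMk, Function.comp_apply, neg_neg, neg_zero, Matrix.of_apply, Matrix.cons_val_succ] using e01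
    · simpa only [J4, Matrix.cons_val_zero, Matrix.cons_val_one, Matrix.head_cons,
        Matrix.cons_val_two, Matrix.tail_cons, Matrix.cons_val_three, Matrix.head_fin_const,
        Matrix.cons_val', Matrix.empty_val', Matrix.cons_val_fin_one, Matrix.vecHead,
        Matrix.vecTail, Fin.zero_eta, Fin.mk_one, Fin.reduceFinMk, Function.comp_apply, neg_neg, neg_zero, Matrix.of_apply, Matrix.cons_val_succ] using hv
    · simpa only [J4, Matrix.cons_val_zero, Matrix.cons_val_one, Matrix.head_cons,
        Matrix.cons_val_two, Matrix.tail_cons, Matrix.cons_val_three, Matrix.head_fin_const,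
        Matrix.cons_val', Matrix.empty_val', Matrix.cons_val_fin_one, Matrix.vecHead,
        Matrix.vecTail, Fin.zero_eta, Fin.mk_one, Fin.reduceFinMk, Function.comp_apply, neg_neg, neg_zero, Matrix.of_apply, Matrix.cons_val_succ] using e03
    · simpa only [J4, Matrix.cons_val_zero, Matrix.cons_val_one, Matrix.head_cons,
        Matrix.cons_val_two, Matrix.tail_cons, Matrix.cons_val_three, Matrix.head_fin_const,
        Matrix.cons_val', Matrix.empty_val', Matrix.cons_val_fin_one, Matrix.vecHead,
        Matrix.vecTail, Fin.zero_eta, Fin.mk_one, Fin.reduceFinMk, Function.comp_apply, neg_neg, neg_zero, Matrix.of_apply, Matrix.cons_val_succ] using e10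
    · simpa only [J4, Matrix.cons_val_zero, Matrix.cons_val_one, Matrix.head_cons,
        Matrix.cons_val_two, Matrix.tail_cons, Matrix.cons_val_three, Matrix.head_fin_const,
        Matrix.cons_val', Matrix.empty_val', Matrix.cons_val_fin_one, Matrix.vecHead,
        Matrix.vecTail, Fin.zero_eta, Fin.mk_one, Fin.reduceFinMk, Function.comp_apply, neg_neg, neg_zero, Matrix.of_apply, Matrix.cons_val_succ] using om_self (A *ᵥ w)
    · simpa only [J4, Matrix.cons_val_zero, Matrix.cons_val_one, Matrix.head_cons,
        Matrix.cons_val_two, Matrix.tail_cons, Matrix.cons_val_three, Matrix.head_fin_const,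
        Matrix.cons_val', Matrix.empty_val', Matrix.cons_val_fin_one, Matrix.vecHead,
        Matrix.vecTail, Fin.zero_eta, Fin.mk_one, Fin.reduceFinMk, Function.comp_apply, neg_neg, neg_zero, Matrix.of_apply, Matrix.cons_val_succ] using e12
    · simpa only [J4, Matrix.cons_val_zero, Matrix.cons_val_one, Matrix.head_cons,
        Matrix.cons_val_two, Matrix.tail_cons, Matrix.cons_val_three, Matrix.head_fin_const,
        Matrix.cons_val', Matrix.empty_val', Matrix.cons_val_fin_one, Matrix.vecHead,
        Matrix.vecTail, Fin.zero_eta, Fin.mk_one, Fin.reduceFinMk, Function.comp_apply, neg_neg, neg_zero, Matrix.of_apply, Matrix.cons_val_succ] using e13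
    · simpa only [J4, Matrix.cons_val_zero, Matrix.cons_val_one, Matrix.head_cons,
        Matrix.cons_val_two, Matrix.tail_cons, Matrix.cons_val_three, Matrix.head_fin_const,
        Matrix.cons_val', Matrix.empty_val', Matrix.cons_val_fin_one, Matrix.vecHead,
        Matrix.vecTail, Fin.zero_eta, Fin.mk_one, Fin.reduceFinMk, Function.comp_apply, neg_neg, neg_zero, Matrix.of_apply, Matrix.cons_val_succ] using e20
    · simpa only [J4, Matrix.cons_val_zero, Matrix.cons_val_one, Matrix.head_cons,
        Matrix.cons_val_two, Matrix.tail_cons, Matrix.cons_val_three, Matrix.head_fin_const,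
        Matrix.cons_val', Matrix.empty_val', Matrix.cons_val_fin_one, Matrix.vecHead,
        Matrix.vecTail, Fin.zero_eta, Fin.mk_one, Fin.reduceFinMk, Function.comp_apply, neg_neg, neg_zero, Matrix.of_apply, Matrix.cons_val_succ] using e21
    · simpa only [J4, Matrix.cons_val_zero, Matrix.cons_val_one, Matrix.head_cons,
        Matrix.cons_val_two, Matrix.tail_cons, Matrix.cons_val_three, Matrix.head_fin_const,
        Matrix.cons_val', Matrix.empty_val', Matrix.cons_val_fin_one, Matrix.vecHead,
        Matrix.vecTail, Fin.zero_eta, Fin.mk_one, Fin.reduceFinMk, Function.comp_apply, neg_neg, neg_zero, Matrix.of_apply, Matrix.cons_val_succ] using om_self v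
    · simpa only [J4, Matrix.cons_val_zero, Matrix.cons_val_one, Matrix.head_cons,
        Matrix.cons_val_two, Matrix.tail_cons, Matrix.cons_val_three, Matrix.head_fin_const,
        Matrix.cons_val', Matrix.empty_val', Matrix.cons_val_fin_one, Matrix.vecHead,
        Matrix.vecTail, Fin.zero_eta, Fin.mk_one, Fin.reduceFinMk, Function.comp_apply, neg_neg, neg_zero, Matrix.of_apply, Matrix.cons_val_succ] using e23
    · simpa only [J4, Matrix.cons_val_zero, Matrix.cons_val_one, Matrix.head_cons,
        Matrix.cons_val_two, Matrix.tail_cons, Matrix.cons_val_three, Matrix.head_fin_const,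
        Matrix.cons_val', Matrix.empty_val', Matrix.cons_val_fin_one, Matrix.vecHead,
        Matrix.vecTail, Fin.zero_eta, Fin.mk_one, Fin.reduceFinMk, Function.comp_apply, neg_neg, neg_zero, Matrix.of_apply, Matrix.cons_val_succ] using e30
    · simpa only [J4, Matrix.cons_val_zero, Matrix.cons_val_one, Matrix.head_cons,
        Matrix.cons_val_two, Matrix.tail_cons, Matrix.cons_val_three, Matrix.head_fin_const,
        Matrix.cons_val', Matrix.empty_val', Matrix.cons_val_fin_one, Matrix.vecHead,
        Matrix.vecTail, Fin.zero_eta, Fin.mk_one, Fin.reduceFinMk, Function.comp_apply, neg_neg, neg_zero, Matrix.of_apply, Matrix.cons_val_succ] using e31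
    · simpa only [J4, Matrix.cons_val_zero, Matrix.cons_val_one, Matrix.head_cons,
        Matrix.cons_val_two, Matrix.tail_cons, Matrix.cons_val_three, Matrix.head_fin_const,
        Matrix.cons_val', Matrix.empty_val', Matrix.cons_val_fin_one, Matrix.vecHead,
        Matrix.vecTail, Fin.zero_eta, Fin.mk_one, Fin.reduceFinMk, Function.comp_apply, neg_neg, neg_zero, Matrix.of_apply, Matrix.cons_val_succ] using e32
    · simpa only [J4, Matrix.cons_val_zero, Matrix.cons_val_one, Matrix.head_cons,
        Matrix.cons_val_two, Matrix.tail_cons, Matrix.cons_val_three, Matrix.head_fin_const,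
        Matrix.cons_val', Matrix.empty_val', Matrix.cons_val_fin_one, Matrix.vecHead,
        Matrix.vecTail, Fin.zero_eta, Fin.mk_one, Fin.reduceFinMk, Function.comp_apply, neg_neg, neg_zero, Matrix.of_apply, Matrix.cons_val_succ] using om_self b4
  set No : Matrix (Fin 4) (Fin 4) ℂ := !![0, 0, 1, 0;
                       0, 0, 0, 1;
                       0, 0, 0, 0;
                       0, 0, 0, 0] with hNo
  have hABm : A * B = B * No := by
    ext i j
    rw [mul_entry]
    have hRHS : (B * No) i j = ∑ k, B i k * No k j := Matrix.mul_apply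
    rw [hRHS]
    fin_cases j
    · show (A *ᵥ (A *ᵥ v)) i = _
      rw [hAA hA2]
      simp [hNo, hB, Fin.sum_univ_four, Matrix.vecHead, Matrix.vecTail]
    · show (A *ᵥ (A *ᵥ w)) i = _
      rw [hAA hA2]
      simp [hNo, hB, Fin.sum_univ_four, Matrix.vecHead, Matrix.vecTail]
    · show (A *ᵥ v) i = _
      simp [hNo, hB, Fin.sum_univ_four, Matrix.vecHead, Matrix.vecTail]
    · show (A *ᵥ b4) i = _
      rw [hAb4]
      simp [hNo, hB, Fin.sum_univ_four, Matrix.vecHead, Matrix.vecTail]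
  have hdet : B.det ≠ 0 := by
    have h1 := congrArg Matrix.det hGram
    rw [Matrix.det_mul, Matrix.det_mul, Matrix.det_transpose, det_J4, mul_one] at h1
    intro h
    rw [h, mul_zero] at h1
    exact zero_ne_one h1
  refine ⟨B, hGram, ?_⟩
  rw [Matrix.mul_assoc, hABm, ← Matrix.mul_assoc, Matrix.nonsing_inv_mul B (isUnit_iff_ne_zero.mpr hdet),
    Matrix.one_mul]
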